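/- The number of spanning trees of S_n × K_2 equals (n+2)·3^(n-2). -/

import Mathlib

/-- `S_n × K_2` on vertex set `Fin n × Fin 2` (star center: first coordinate `0`). -/
def snK2 (n : ℕ) : SimpleGraph (Fin n × Fin 2) :=
  SimpleGraph.fromRel (fun p q => (p.2 = q.2 ∧ (p.1.val = 0 ∨ q.1.val = 0)) ∨ p.1 = q.1)

namespace SnK2Aux

open SimpleGraph

abbrev Tp := Bool × Bool × Bool

/-- configurations: the center rung plus, for each leaf, (spoke₀, rung, spoke₁) -/
def Cfg (n : ℕ) := Bool × ({i : Fin n // i.val ≠ 0} → Tp)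

variable {n : ℕ}

def tOf (c : Cfg n) (i : Fin n) : Tp := if h : i.val = 0 then (false, false, false) else c.2 ⟨i, h⟩

def rOn (c : Cfg n) (i : Fin n) : Prop :=
  if i.val = 0 then c.1 = true else (tOf c i).2.1 = true

def aOn (c : Cfg n) (i : Fin n) : Prop := i.val ≠ 0 ∧ (tOf c i).1 = true

def bOn (c : Cfg n) (i : Fin n) : Prop := i.val ≠ 0 ∧ (tOf c i).2.2 = true

/-- the edge relation determined by a configuration -/
def eIn (c : Cfg n) (p q : Fin n × Fin 2) : Prop :=
  (p.1 = q.1 ∧ p.2 ≠ q.2 ∧ rOn c p.1)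
  ∨ (p.1.val = 0 ∧ q.2 = p.2 ∧ (if p.2 = 0 then aOn c q.1 else bOn c q.1))
  ∨ (q.1.val = 0 ∧ p.2 = q.2 ∧ (if q.2 = 0 then aOn c p.1 else bOn c p.1))

lemma fin2cases (x : Fin 2) : x = 0 ∨ x = 1 := by fin_cases x <;> simp

lemma eIn_symm (c : Cfg n) {p q : Fin n × Fin 2} (h : eIn c p q) : eIn c q p := by
  obtain ⟨h1, h2, h3⟩ | ⟨h1, h2, h3⟩ | ⟨h1, h2, h3⟩ := h
  · exact Or.inl ⟨h1.symm, Ne.symm h2, h1 ▸ h3⟩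
  · exact Or.inr (Or.inr ⟨h1, h2, h3⟩)
  · exact Or.inr (Or.inl ⟨h1, h2, h3⟩)

lemma eIn_ne (c : Cfg n) {p q : Fin n × Fin 2} (h : eIn c p q) : p ≠ q := by
  obtain ⟨h1, h2, h3⟩ | ⟨h1, h2, h3⟩ | ⟨h1, h2, h3⟩ := h
  · exact fun he => h2 (congrArg Prod.snd he)
  · have hq : q.1.val ≠ 0 := by
      rcases fin2cases p.2 with h0 | h0 <;> simp [h0] at h3 <;> exact h3.1
    exact fun he => hq (he ▸ h1)
  · have hp : p.1.val ≠ 0 := by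
      rcases fin2cases q.2 with h0 | h0 <;> simp [h0] at h3 <;> exact h3.1
    exact fun he => hp (he ▸ h1.symm ▸ rfl)

lemma eIn_sub (c : Cfg n) {p q : Fin n × Fin 2} (h : eIn c p q) : (snK2 n).Adj p q := by
  rw [snK2, fromRel_adj]
  refine ⟨eIn_ne c h, ?_⟩
  obtain ⟨h1, h2, h3⟩ | ⟨h1, h2, h3⟩ | ⟨h1, h2, h3⟩ := h
  · exact Or.inl (Or.inr h1)
  · exact Or.inl (Or.inl ⟨h2.symm, Or.inl h1⟩)
  · exact Or.inl (Or.inl ⟨h2, Or.inr h1⟩)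

def Φ (c : Cfg n) : (snK2 n).Subgraph where
  verts := Set.univ
  Adj := eIn c
  adj_sub := eIn_sub c
  edge_vert := fun _ => Set.mem_univ _
  symm := ⟨fun p q => eIn_symm c⟩

lemma Φ_spanning (c : Cfg n) : (Φ c).IsSpanning := fun _ => Set.mem_univ _

end SnK2Aux

namespace SnK2Aux
open SimpleGraph
variable {n : ℕ}

lemma snK2_adj {p q : Fin n × Fin 2} : (snK2 n).Adj p q ↔
    (p.1 = q.1 ∧ p.2 ≠ q.2) ∨ (p.2 = q.2 ∧ p.1 ≠ q.1 ∧ (p.1.val = 0 ∨ q.1.val = 0)) := by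
  rw [snK2, fromRel_adj]
  constructor
  · rintro ⟨hne, (⟨h1, h2⟩ | h1) | (⟨h1, h2⟩ | h1)⟩
    · exact Or.inr ⟨h1, fun he => hne (Prod.ext he h1), h2⟩
    · exact Or.inl ⟨h1, fun he => hne (Prod.ext h1 he)⟩
    · exact Or.inr ⟨h1.symm, fun he => hne (Prod.ext he h1.symm), h2.symm⟩
    · exact Or.inl ⟨h1.symm, fun he => hne (Prod.ext h1.symm he)⟩
  · rintro (⟨h1, h2⟩ | ⟨h1, h2, h3⟩)
    · exact ⟨fun he => h2 (congrArg Prod.snd he), Or.inl (Or.inr h1)⟩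
    · exact ⟨fun he => h2 (congrArg Prod.fst he), Or.inl (Or.inl ⟨h1, h3⟩)⟩

variable [NeZero n]

lemma val0 : ((0 : Fin n) : ℕ) = 0 := rfl

lemma eIn_rung0 {c : Cfg n} : eIn c ((0 : Fin n), (0 : Fin 2)) (0, 1) ↔ c.1 = true := by
  simp [eIn, rOn]

lemma eIn_rung {c : Cfg n} {i : Fin n} (hi : i.val ≠ 0) :
    eIn c (i, (0 : Fin 2)) (i, 1) ↔ (tOf c i).2.1 = true := by
  simp [eIn, rOn, hi]

lemma eIn_a {c : Cfg n} {i : Fin n} : eIn c ((0 : Fin n), (0 : Fin 2)) (i, 0) ↔ aOn c i := by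
  simp [eIn, aOn]

lemma eIn_b {c : Cfg n} {i : Fin n} : eIn c (i, (1 : Fin 2)) ((0 : Fin n), 1) ↔ bOn c i := by
  simp [eIn, bOn, rOn]

noncomputable def dec (p : Prop) : Bool := @decide p (Classical.propDecidable p)

lemma dec_iff {p : Prop} : dec p = true ↔ p := by
  simp [dec]

lemma dec_prop {p : Prop} {b : Bool} (h : p ↔ b = true) : dec p = b := by
  cases b
  · have hp : ¬ p := by simpa using h
    simp [dec, hp]
  · exact dec_iff.2 (h.2 rfl)

noncomputable def decode (H : (snK2 n).Subgraph) : Cfg n :=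
  (dec (H.Adj (0, 0) (0, 1)),
   fun i => (dec (H.Adj (0, 0) (i.1, 0)), dec (H.Adj (i.1, 0) (i.1, 1)),
             dec (H.Adj (i.1, 1) (0, 1))))

lemma tOf_coe (c : Cfg n) (i : {i : Fin n // i.val ≠ 0}) : tOf c i.1 = c.2 i := by
  simp [tOf, i.2]

lemma decode_Φ (c : Cfg n) : decode (Φ c) = c := by
  have hΦ : ∀ p q, (Φ c).Adj p q ↔ eIn c p q := fun _ _ => Iff.rfl
  refine Prod.ext ?_ (funext fun i => ?_)
  · exact dec_prop (by rw [hΦ]; exact eIn_rung0)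
  · refine Prod.ext ?_ (Prod.ext ?_ ?_)
    · refine dec_prop ?_
      rw [hΦ, eIn_a, aOn, tOf_coe]
      simp [i.2]
    · refine dec_prop ?_
      rw [hΦ, eIn_rung i.2, tOf_coe]
    · refine dec_prop ?_
      rw [hΦ, eIn_b, bOn, tOf_coe]
      simp [i.2]

end SnK2Aux

namespace SnK2Aux
open SimpleGraph
variable {n : ℕ} [NeZero n]

lemma fz {i : Fin n} (h : i.val = 0) : i = 0 := Fin.ext (h.trans val0.symm)

lemma one_ne_zero2 : (1 : Fin 2) ≠ 0 := by decide

lemma Φ_decode {H : (snK2 n).Subgraph} (hs : H.IsSpanning) : Φ (decode H) = H := by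
  refine Subgraph.ext hs.verts_eq_univ.symm ?_
  funext p q
  apply propext
  obtain ⟨pi, pj⟩ := p
  obtain ⟨qi, qj⟩ := q
  constructor
  · rintro (⟨h1, h2, h3⟩ | ⟨h1, h2, h3⟩ | ⟨h1, h2, h3⟩)
    · simp only at h1 h2 h3
      subst h1
      rw [rOn] at h3
      by_cases hv : pi.val = 0
      · rw [if_pos hv] at h3
        have hadj := dec_iff.1 h3
        have h0 : pi = 0 := fz hv
        subst h0
        rcases fin2cases pj with h | h <;> rcases fin2cases qj with h' | h' <;>
          subst h <;> subst h' <;> first | exact absurd rfl h2 | exact hadj | exact hadj.symm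
      · rw [if_neg hv, tOf, dif_neg hv] at h3
        have hadj := dec_iff.1 h3
        rcases fin2cases pj with h | h <;> rcases fin2cases qj with h' | h' <;>
          subst h <;> subst h' <;> first | exact absurd rfl h2 | exact hadj | exact hadj.symm
    · simp only at h1 h2 h3
      have h0 : pi = 0 := fz h1
      subst h0
      rcases fin2cases pj with h | h <;> subst h <;> subst h2
      · rw [if_pos rfl] at h3
        obtain ⟨hq, ht⟩ := h3
        rw [tOf, dif_neg hq] at ht
        exact dec_iff.1 ht
      · rw [if_neg one_ne_zero2] at h3
        obtain ⟨hq, ht⟩ := h3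
        rw [tOf, dif_neg hq] at ht
        exact (dec_iff.1 ht).symm
    · simp only at h1 h2 h3
      have h0 : qi = 0 := fz h1
      subst h0
      rcases fin2cases qj with h | h <;> subst h <;> subst h2
      · rw [if_pos rfl] at h3
        obtain ⟨hp, ht⟩ := h3
        rw [tOf, dif_neg hp] at ht
        exact (dec_iff.1 ht).symm
      · rw [if_neg one_ne_zero2] at h3
        obtain ⟨hp, ht⟩ := h3
        rw [tOf, dif_neg hp] at ht
        exact dec_iff.1 ht
  · intro h
    rcases snK2_adj.1 (H.adj_sub h) with ⟨h1, h2⟩ | ⟨h1, h2, h3⟩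
    · simp only at h1 h2
      subst h1
      refine Or.inl ⟨rfl, h2, ?_⟩
      rw [rOn]
      by_cases hv : pi.val = 0
      · rw [if_pos hv]
        have h0 : pi = 0 := fz hv
        subst h0
        refine dec_iff.2 ?_
        rcases fin2cases pj with hh | hh <;> rcases fin2cases qj with hh' | hh' <;>
          subst hh <;> subst hh' <;> first | exact absurd rfl h2 | exact h | exact H.symm.symm _ _ h
      · rw [if_neg hv, tOf, dif_neg hv]
        refine dec_iff.2 ?_
        rcases fin2cases pj with hh | hh <;> rcases fin2cases qj with hh' | hh' <;>
          subst hh <;> subst hh' <;> first | exact absurd rfl h2 | exact h | exact H.symm.symm _ _ h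
    · simp only at h1 h2 h3
      subst h1
      rcases h3 with hv | hv
      · have h0 : pi = 0 := fz hv
        subst h0
        have hq : qi.val ≠ 0 := fun hq0 => h2 ((fz hq0).symm ▸ rfl)
        refine Or.inr (Or.inl ⟨rfl, rfl, ?_⟩)
        rcases fin2cases pj with hh | hh <;> subst hh
        · rw [if_pos rfl]
          exact ⟨hq, by rw [tOf, dif_neg hq]; exact dec_iff.2 h⟩
        · rw [if_neg one_ne_zero2]
          exact ⟨hq, by rw [tOf, dif_neg hq]; exact dec_iff.2 (H.symm.symm _ _ h)⟩
      · have h0 : qi = 0 := fz hv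
        subst h0
        have hp : pi.val ≠ 0 := fun hp0 => h2 (fz hp0)
        refine Or.inr (Or.inr ⟨rfl, rfl, ?_⟩)
        rcases fin2cases pj with hh | hh <;> subst hh
        · rw [if_pos rfl]
          exact ⟨hp, by rw [tOf, dif_neg hp]; exact dec_iff.2 (H.symm.symm _ _ h)⟩
        · rw [if_neg one_ne_zero2]
          exact ⟨hp, by rw [tOf, dif_neg hp]; exact dec_iff.2 h⟩

end SnK2Aux

namespace SnK2Aux
open SimpleGraph
variable {n : ℕ} [NeZero n]

omit [NeZero n] in
lemma walk_inv {α : Type*} {G : SimpleGraph α} (g : α → Bool)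
    (h : ∀ ⦃a b⦄, G.Adj a b → g a = g b) {u v : α} (hr : G.Reachable u v) : g u = g v := by
  obtain ⟨w⟩ := hr
  induction w with
  | nil => rfl
  | cons ha _ ih => exact (h ha).trans ih

omit [NeZero n] in
lemma bridge_of_color {α : Type*} {G : SimpleGraph α} {u v : α} (hadj : G.Adj u v)
    (g : α → Bool) (h : ∀ ⦃a b⦄, G.Adj a b → s(a, b) ≠ s(u, v) → g a = g b)
    (hne : g u ≠ g v) : G.IsBridge s(u, v) := by
  rw [SimpleGraph.isBridge_iff]
  refine fun hr => hne (walk_inv g ?_ hr)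
  intro a b hab
  rw [SimpleGraph.deleteEdges_adj] at hab
  refine h hab.1 fun he => hab.2 (he ▸ Set.mem_singleton _)

def Gc (c : Cfg n) : SimpleGraph (Fin n × Fin 2) := (Φ c).spanningCoe

lemma Gc_adj {c : Cfg n} {p q : Fin n × Fin 2} : (Gc c).Adj p q ↔ eIn c p q := Iff.rfl

lemma eIn_color (c : Cfg n) (κ : Fin n → Fin 2 → Bool) (X : Sym2 (Fin n × Fin 2))
    (hr : ∀ i : Fin n, rOn c i → s(((i, 0) : Fin n × Fin 2), (i, 1)) ≠ X → κ i 0 = κ i 1)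
    (ha : ∀ i : Fin n, aOn c i → s((((0 : Fin n), (0 : Fin 2))), (i, 0)) ≠ X → κ i 0 = κ 0 0)
    (hb : ∀ i : Fin n, bOn c i → s(((i, (1 : Fin 2))), ((0 : Fin n), 1)) ≠ X → κ i 1 = κ 0 1)
    ⦃p q : Fin n × Fin 2⦄ (hpq : eIn c p q) (hX : s(p, q) ≠ X) :
    κ p.1 p.2 = κ q.1 q.2 := by
  obtain ⟨pi, pj⟩ := p
  obtain ⟨qi, qj⟩ := q
  rcases hpq with ⟨h1, h2, h3⟩ | ⟨h1, h2, h3⟩ | ⟨h1, h2, h3⟩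
  · simp only at h1 h2 h3 hX ⊢
    subst h1
    rcases fin2cases pj with h | h <;> rcases fin2cases qj with h' | h' <;>
        subst h <;> subst h'
    · exact absurd rfl h2
    · exact hr pi h3 hX
    · refine (hr pi h3 ?_).symm
      rwa [Sym2.eq_swap] at hX
    · exact absurd rfl h2
  · simp only at h1 h2 h3 hX ⊢
    have h0 : pi = 0 := fz h1
    subst h0
    rcases fin2cases pj with h | h <;> subst h <;> subst h2
    · rw [if_pos rfl] at h3
      exact (ha qi h3 hX).symm
    · rw [if_neg one_ne_zero2] at h3
      refine (hb qi h3 ?_).symm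
      rwa [Sym2.eq_swap] at hX
  · simp only at h1 h2 h3 hX ⊢
    have h0 : qi = 0 := fz h1
    subst h0
    rcases fin2cases qj with h | h <;> subst h <;> subst h2
    · rw [if_pos rfl] at h3
      refine ha pi h3 ?_
      rwa [Sym2.eq_swap] at hX
    · rw [if_neg one_ne_zero2] at h3
      exact hb pi h3 hX

/-- colorings with no exceptional edge give reachability invariants on `Gc`. -/
lemma eIn_color_reach (c : Cfg n) (κ : Fin n → Fin 2 → Bool)
    (hr : ∀ i : Fin n, rOn c i → κ i 0 = κ i 1)
    (ha : ∀ i : Fin n, aOn c i → κ i 0 = κ 0 0)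
    (hb : ∀ i : Fin n, bOn c i → κ i 1 = κ 0 1)
    {p q : Fin n × Fin 2} (hreach : (Gc c).Reachable p q) :
    κ p.1 p.2 = κ q.1 q.2 := by
  classical
  by_cases hpq : p = q
  · rw [hpq]
  · refine walk_inv (fun v => κ v.1 v.2) ?_ hreach
    intro a b hab
    exact eIn_color c κ (s(a, a)) (fun i hi _ => hr i hi) (fun i hi _ => ha i hi)
      (fun i hi _ => hb i hi) (Gc_adj.1 hab)
      (by simp [Sym2.eq_iff]; exact fun hh => (eIn_ne c (Gc_adj.1 hab)) hh.symm)

end SnK2Aux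

namespace SnK2Aux
open SimpleGraph
variable {n : ℕ} [NeZero n]

def two (t : Tp) : Prop :=
  t = (true, true, false) ∨ t = (true, false, true) ∨ t = (false, true, true)

def three (t : Tp) : Prop := t = (true, true, true)

/-- the predicate on configurations characterizing spanning trees -/
def P (c : Cfg n) : Prop :=
  (c.1 = true ∧ ∀ i, two (c.2 i)) ∨
  (c.1 = false ∧ ∃ i, three (c.2 i) ∧ ∀ j, j ≠ i → two (c.2 j))

omit [NeZero n] in
lemma not_two_three {t : Tp} (h2 : two t) (h3 : three t) : False := by
  rw [three] at h3
  subst h3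
  simp [two] at h2

lemma P_two_or_three {c : Cfg n} (hP : P c) {i : Fin n} (hi : i.val ≠ 0) :
    two (tOf c i) ∨ three (tOf c i) := by
  rw [tOf, dif_neg hi]
  rcases hP with ⟨_, h⟩ | ⟨_, i₀, h3, h2⟩
  · exact Or.inl (h _)
  · by_cases he : (⟨i, hi⟩ : {i : Fin n // i.val ≠ 0}) = i₀
    · exact Or.inr (he ▸ h3)
    · exact Or.inl (h2 _ he)

-- adjacency constructors
lemma adj_e {c : Cfg n} (h : c.1 = true) :
    (Gc c).Adj ((0 : Fin n), (0 : Fin 2)) (0, 1) := Gc_adj.2 (eIn_rung0.2 h)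

lemma adj_r {c : Cfg n} {i : Fin n} (hi : i.val ≠ 0) (h : (tOf c i).2.1 = true) :
    (Gc c).Adj (i, (0 : Fin 2)) (i, 1) := Gc_adj.2 ((eIn_rung hi).2 h)

lemma adj_a {c : Cfg n} {i : Fin n} (hi : i.val ≠ 0) (h : (tOf c i).1 = true) :
    (Gc c).Adj ((0 : Fin n), (0 : Fin 2)) (i, 0) := Gc_adj.2 (eIn_a.2 ⟨hi, h⟩)

lemma adj_b {c : Cfg n} {i : Fin n} (hi : i.val ≠ 0) (h : (tOf c i).2.2 = true) :
    (Gc c).Adj (i, (1 : Fin 2)) ((0 : Fin n), 1) := Gc_adj.2 (eIn_b.2 ⟨hi, h⟩)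

lemma reach_s1 {c : Cfg n} (hP : P c) :
    (Gc c).Reachable ((0 : Fin n), (1 : Fin 2)) (0, 0) := by
  rcases hP with ⟨he, _⟩ | ⟨_, i, h3, _⟩
  · exact (adj_e he).symm.reachable
  · have h3' : tOf c i.1 = (true, true, true) := by rw [tOf_coe]; exact h3
    refine ((adj_b i.2 (by rw [h3'])).symm.reachable).trans ?_
    refine ((adj_r i.2 (by rw [h3'])).symm.reachable).trans ?_
    exact (adj_a i.2 (by rw [h3'])).symm.reachable

lemma reach_all {c : Cfg n} (hP : P c) (v : Fin n × Fin 2) :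
    (Gc c).Reachable v ((0 : Fin n), (0 : Fin 2)) := by
  obtain ⟨vi, vj⟩ := v
  by_cases hv : vi.val = 0
  · have h0 : vi = 0 := fz hv
    subst h0
    rcases fin2cases vj with h | h <;> subst h
    · rfl
    · exact reach_s1 hP
  · have h23 := P_two_or_three hP hv
    have hreach1 : (tOf c vi).2.2 = true → (Gc c).Reachable (vi, 1) ((0 : Fin n), 0) :=
      fun hb => ((adj_b hv hb).reachable).trans (reach_s1 hP)
    have hreach0 : (tOf c vi).1 = true → (Gc c).Reachable (vi, 0) ((0 : Fin n), 0) :=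
      fun ha => (adj_a hv ha).symm.reachable
    rcases fin2cases vj with h | h <;> subst h
    · rcases h23 with (h | h | h) | h
      · exact hreach0 (by rw [h])
      · exact hreach0 (by rw [h])
      · exact ((adj_r hv (by rw [h])).reachable).trans (hreach1 (by rw [h]))
      · exact hreach0 (by rw [(h : tOf c vi = (true, true, true))])
    · rcases h23 with (h | h | h) | h
      · exact ((adj_r hv (by rw [h])).symm.reachable).trans (hreach0 (by rw [h]))
      · exact hreach1 (by rw [h])
      · exact hreach1 (by rw [h])
      · exact hreach1 (by rw [(h : tOf c vi = (true, true, true))])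

lemma connected_of_P {c : Cfg n} (hP : P c) : (Gc c).Connected := by
  rw [connected_iff_exists_forall_reachable]
  exact ⟨_, fun w => (reach_all hP w).symm⟩

end SnK2Aux

namespace SnK2Aux
open SimpleGraph
variable {n : ℕ} [NeZero n]

lemma P_case1 {c : Cfg n} (hP : P c) (he : c.1 = true) :
    ∀ i : Fin n, i.val ≠ 0 → two (tOf c i) := by
  rcases hP with ⟨_, h⟩ | ⟨hef, _⟩
  · intro i hv
    rw [tOf, dif_neg hv]
    exact h ⟨i, hv⟩
  · rw [he] at hef
    cases hef

lemma P_case3 {c : Cfg n} {i : Fin n} (hP : P c) (hv : i.val ≠ 0) (h3 : tOf c i = (true, true, true)) :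
    c.1 = false ∧ ∀ j : Fin n, j.val ≠ 0 → j ≠ i → two (tOf c j) := by
  rcases hP with ⟨_, h⟩ | ⟨hef, i₀, h3', h2'⟩
  · exfalso
    rw [tOf, dif_neg hv] at h3
    exact not_two_three (h ⟨i, hv⟩) h3
  · have hi0 : i₀ = ⟨i, hv⟩ := by
      by_contra hne
      rw [tOf, dif_neg hv] at h3
      exact not_two_three (h2' ⟨i, hv⟩ fun hh => hne hh.symm) h3
  
    refine ⟨hef, fun j hjv hji => ?_⟩
    rw [tOf, dif_neg hjv]
    refine h2' ⟨j, hjv⟩ ?_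
    rw [hi0]
    exact fun hh => hji (congrArg Subtype.val hh)

/-- The two-sides coloring. -/
def κside (c : Cfg n) : Fin n → Fin 2 → Bool := fun i j =>
  if i.val = 0 then decide (j = 1) else if j = 0 then !(tOf c i).1 else (tOf c i).2.2

lemma bridge_e {c : Cfg n} (he : c.1 = true)
    (htwo : ∀ i : Fin n, i.val ≠ 0 → two (tOf c i)) :
    (Gc c).IsBridge s((((0 : Fin n), (0 : Fin 2))), (0, 1)) := by
  refine bridge_of_color (adj_e he) (fun v => κside c v.1 v.2) ?_ (by simp [κside, val0])
  intro p q hpq hne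
  refine eIn_color c (κside c) _ ?_ ?_ ?_ (Gc_adj.1 hpq) hne
  · intro i hi hX
    by_cases hv : i.val = 0
    · exact absurd (by rw [fz hv]) hX
    · rw [rOn, if_neg hv] at hi
      rcases htwo i hv with h | h | h
      · simp [κside, hv, h]
      · rw [h] at hi; cases hi
      · simp [κside, hv, h]
  · rintro i ⟨hv, ha⟩ _
    simp [κside, hv, ha, val0]
  · rintro i ⟨hv, hb⟩ _
    simp [κside, hv, hb, val0]

lemma bridge_r3 {c : Cfg n} {i : Fin n} (hv : i.val ≠ 0) (hef : c.1 = false)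
    (h3 : tOf c i = (true, true, true))
    (htwo : ∀ j : Fin n, j.val ≠ 0 → j ≠ i → two (tOf c j)) :
    (Gc c).IsBridge s(((i, (0 : Fin 2))), (i, 1)) := by
  refine bridge_of_color (adj_r hv (by rw [h3])) (fun v => κside c v.1 v.2) ?_
    (by simp [κside, hv, h3])
  intro p q hpq hne
  refine eIn_color c (κside c) _ ?_ ?_ ?_ (Gc_adj.1 hpq) hne
  · intro j hj hX
    by_cases hjv : j.val = 0
    · rw [rOn, if_pos hjv, hef] at hj
      cases hj
    · by_cases hji : j = i
      · exact absurd (by rw [hji]) hX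
      · rw [rOn, if_neg hjv] at hj
        rcases htwo j hjv hji with h | h | h
        · simp [κside, hjv, h]
        · rw [h] at hj; cases hj
        · simp [κside, hjv, h]
  · rintro j ⟨hjv, ha⟩ _
    simp [κside, hjv, ha, val0]
  · rintro j ⟨hjv, hb⟩ _
    simp [κside, hjv, hb, val0]

lemma bridge_r2 {c : Cfg n} {i : Fin n} (hv : i.val ≠ 0) (h2 : two (tOf c i))
    (hrr : (tOf c i).2.1 = true) :
    (Gc c).IsBridge s(((i, (0 : Fin 2))), (i, 1)) := by
  have h0i : (0 : Fin n) ≠ i := fun h => hv (by rw [← h, val0])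
  refine bridge_of_color (adj_r hv hrr)
    (fun v => decide (v.1 = i) && (if (tOf c i).1 then decide (v.2 = 1) else decide (v.2 = 0)))
    ?_ (by cases hh : (tOf c i).1 <;> simp [hh])
  intro p q hpq hne
  refine eIn_color c
    (fun i' j => decide (i' = i) && (if (tOf c i).1 then decide (j = 1) else decide (j = 0)))
    _ ?_ ?_ ?_ (Gc_adj.1 hpq) hne
  · intro j _ hX
    by_cases hji : j = i
    · exact absurd (by rw [hji]) hX
    · simp [hji]
  · rintro j ⟨hjv, ha⟩ _
    by_cases hji : j = i
    · subst hji
      simp [ha, h0i]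
    · simp [hji, h0i]
  · rintro j ⟨hjv, hb⟩ _
    by_cases hji : j = i
    · subst hji
      rcases h2 with h | h | h
      · rw [h] at hb; cases hb
      · rw [h] at hrr; cases hrr
      · simp [h, h0i]
    · simp [hji, h0i]

lemma bridge_a2 {c : Cfg n} {i : Fin n} (hv : i.val ≠ 0) (h2 : two (tOf c i))
    (haa : (tOf c i).1 = true) :
    (Gc c).IsBridge s((((0 : Fin n), (0 : Fin 2))), (i, 0)) := by
  have h0i : (0 : Fin n) ≠ i := fun h => hv (by rw [← h, val0])
  refine bridge_of_color (adj_a hv haa)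
    (fun v => decide (v.1 = i) && (decide (v.2 = 0) || (tOf c i).2.1))
    ?_ (by simp [h0i])
  intro p q hpq hne
  refine eIn_color c
    (fun i' j => decide (i' = i) && (decide (j = 0) || (tOf c i).2.1))
    _ ?_ ?_ ?_ (Gc_adj.1 hpq) hne
  · intro j hj hX
    by_cases hji : j = i
    · subst hji
      rw [rOn, if_neg hv] at hj
      simp [hj]
    · simp [hji]
  · rintro j ⟨hjv, ha⟩ hX
    by_cases hji : j = i
    · exact absurd (by rw [hji]) hX
    · simp [hji, h0i]
  · rintro j ⟨hjv, hb⟩ _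
    by_cases hji : j = i
    · subst hji
      rcases h2 with h | h | h
      · rw [h] at hb; cases hb
      · simp [h, h0i]
      · rw [h] at haa; cases haa
    · simp [hji, h0i]

lemma bridge_b2 {c : Cfg n} {i : Fin n} (hv : i.val ≠ 0) (h2 : two (tOf c i))
    (hbb : (tOf c i).2.2 = true) :
    (Gc c).IsBridge s(((i, (1 : Fin 2))), ((0 : Fin n), 1)) := by
  have h0i : (0 : Fin n) ≠ i := fun h => hv (by rw [← h, val0])
  refine bridge_of_color (adj_b hv hbb)
    (fun v => decide (v.1 = i) && (decide (v.2 = 1) || (tOf c i).2.1))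
    ?_ (by simp [h0i])
  intro p q hpq hne
  refine eIn_color c
    (fun i' j => decide (i' = i) && (decide (j = 1) || (tOf c i).2.1))
    _ ?_ ?_ ?_ (Gc_adj.1 hpq) hne
  · intro j hj hX
    by_cases hji : j = i
    · subst hji
      rw [rOn, if_neg hv] at hj
      simp [hj]
    · simp [hji]
  · rintro j ⟨hjv, ha⟩ _
    by_cases hji : j = i
    · subst hji
      rcases h2 with h | h | h
      · rw [h] at hbb; cases hbb
      · simp [h, h0i]
      · rw [h] at ha; cases ha
    · simp [hji, h0i]
  · rintro j ⟨hjv, hb⟩ hX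
    by_cases hji : j = i
    · exact absurd (by rw [hji]) hX
    · simp [hji, h0i]

/-- side coloring with the special leaf `i` moved entirely to one side -/
def κhalf (c : Cfg n) (i : Fin n) (s : Bool) : Fin n → Fin 2 → Bool := fun i' j =>
  if i'.val = 0 then decide (j = 1) else if i' = i then s
  else if j = 0 then !(tOf c i').1 else (tOf c i').2.2

lemma bridge_a3 {c : Cfg n} {i : Fin n} (hv : i.val ≠ 0) (hef : c.1 = false)
    (h3 : tOf c i = (true, true, true))
    (htwo : ∀ j : Fin n, j.val ≠ 0 → j ≠ i → two (tOf c j)) :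
    (Gc c).IsBridge s((((0 : Fin n), (0 : Fin 2))), (i, 0)) := by
  refine bridge_of_color (adj_a hv (by rw [h3])) (fun v => κhalf c i true v.1 v.2) ?_
    (by simp [κhalf, hv, val0])
  intro p q hpq hne
  refine eIn_color c _ _ ?_ ?_ ?_ (Gc_adj.1 hpq) hne
  · intro j hj hX
    by_cases hjv : j.val = 0
    · rw [rOn, if_pos hjv, hef] at hj
      cases hj
    · by_cases hji : j = i
      · simp [κhalf, hjv, hji, hv]
      · rw [rOn, if_neg hjv] at hj
        rcases htwo j hjv hji with h | h | h
        · simp [κhalf, hjv, hji, h]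
        · rw [h] at hj; cases hj
        · simp [κhalf, hjv, hji, h]
  · rintro j ⟨hjv, ha⟩ hX
    by_cases hji : j = i
    · exact absurd (by rw [hji]) hX
    · simp [κhalf, hjv, hji, ha, val0]
  · rintro j ⟨hjv, hb⟩ _
    by_cases hji : j = i
    · simp [κhalf, hjv, hji, hv, val0]
    · simp [κhalf, hjv, hji, hb, val0]

lemma bridge_b3 {c : Cfg n} {i : Fin n} (hv : i.val ≠ 0) (hef : c.1 = false)
    (h3 : tOf c i = (true, true, true))
    (htwo : ∀ j : Fin n, j.val ≠ 0 → j ≠ i → two (tOf c j)) :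
    (Gc c).IsBridge s(((i, (1 : Fin 2))), ((0 : Fin n), 1)) := by
  refine bridge_of_color (adj_b hv (by rw [h3])) (fun v => κhalf c i false v.1 v.2) ?_
    (by simp [κhalf, hv, val0])
  intro p q hpq hne
  refine eIn_color c _ _ ?_ ?_ ?_ (Gc_adj.1 hpq) hne
  · intro j hj hX
    by_cases hjv : j.val = 0
    · rw [rOn, if_pos hjv, hef] at hj
      cases hj
    · by_cases hji : j = i
      · simp [κhalf, hjv, hji, hv]
      · rw [rOn, if_neg hjv] at hj
        rcases htwo j hjv hji with h | h | h
        · simp [κhalf, hjv, hji, h]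
        · rw [h] at hj; cases hj
        · simp [κhalf, hjv, hji, h]
  · rintro j ⟨hjv, ha⟩ _
    by_cases hji : j = i
    · simp [κhalf, hjv, hji, hv, val0]
    · simp [κhalf, hjv, hji, ha, val0]
  · rintro j ⟨hjv, hb⟩ hX
    by_cases hji : j = i
    · exact absurd (by rw [hji]) hX
    · simp [κhalf, hjv, hji, hb, val0]

end SnK2Aux

namespace SnK2Aux
open SimpleGraph
variable {n : ℕ} [NeZero n]

lemma acyclic_of_P {c : Cfg n} (hP : P c) : (Gc c).IsAcyclic := by
  rw [isAcyclic_iff_forall_adj_isBridge]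
  intro p q hadj
  have hpq := Gc_adj.1 hadj
  obtain ⟨pi, pj⟩ := p
  obtain ⟨qi, qj⟩ := q
  rcases hpq with ⟨h1, h2, h3⟩ | ⟨h1, h2, h3⟩ | ⟨h1, h2, h3⟩
  · -- rung edge
    simp only at h1 h2 h3
    subst h1
    have key : (Gc c).IsBridge s(((pi, (0 : Fin 2))), (pi, 1)) := by
      by_cases hv : pi.val = 0
      · rw [rOn, if_pos hv] at h3
        have h0 : pi = 0 := fz hv
        subst h0
        exact bridge_e h3 (P_case1 hP h3)
      · rw [rOn, if_neg hv] at h3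
        rcases P_two_or_three hP hv with h | h
        · exact bridge_r2 hv h h3
        · obtain ⟨hef, htwo⟩ := P_case3 hP hv h
          exact bridge_r3 hv hef h htwo
    rcases fin2cases pj with h | h <;> rcases fin2cases qj with h' | h' <;>
        subst h <;> subst h'
    · exact absurd rfl h2
    · exact key
    · rwa [Sym2.eq_swap]
    · exact absurd rfl h2
  · -- spoke with center on the left
    simp only at h1 h2 h3
    have h0 : pi = 0 := fz h1
    subst h0
    rcases fin2cases pj with h | h <;> subst h <;> subst h2
    · rw [if_pos rfl] at h3
      obtain ⟨hqv, ha⟩ := h3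
      rcases P_two_or_three hP hqv with h | h
      · exact bridge_a2 hqv h ha
      · obtain ⟨hef, htwo⟩ := P_case3 hP hqv h
        exact bridge_a3 hqv hef h htwo
    · rw [if_neg one_ne_zero2] at h3
      obtain ⟨hqv, hb⟩ := h3
      rw [Sym2.eq_swap]
      rcases P_two_or_three hP hqv with h | h
      · exact bridge_b2 hqv h hb
      · obtain ⟨hef, htwo⟩ := P_case3 hP hqv h
        exact bridge_b3 hqv hef h htwo
  · -- spoke with center on the right
    simp only at h1 h2 h3
    have h0 : qi = 0 := fz h1
    subst h0
    rcases fin2cases qj with h | h <;> subst h <;> subst h2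
    · rw [if_pos rfl] at h3
      obtain ⟨hpv, ha⟩ := h3
      rw [Sym2.eq_swap]
      rcases P_two_or_three hP hpv with h | h
      · exact bridge_a2 hpv h ha
      · obtain ⟨hef, htwo⟩ := P_case3 hP hpv h
        exact bridge_a3 hpv hef h htwo
    · rw [if_neg one_ne_zero2] at h3
      obtain ⟨hpv, hb⟩ := h3
      rcases P_two_or_three hP hpv with h | h
      · exact bridge_b2 hpv h hb
      · obtain ⟨hef, htwo⟩ := P_case3 hP hpv h
        exact bridge_b3 hpv hef h htwo

lemma isTree_of_P {c : Cfg n} (hP : P c) : (Gc c).IsTree :=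
  ⟨connected_of_P hP, acyclic_of_P hP⟩

end SnK2Aux

namespace SnK2Aux
open SimpleGraph
variable {n : ℕ} [NeZero n]

omit [NeZero n] in
lemma sym2_ne_fst {α : Type*} {u v z w : α} (h1 : u ≠ z) (h2 : u ≠ w) :
    s(u, v) ≠ s(z, w) := by
  intro h
  rcases Sym2.eq_iff.1 h with ⟨a, _⟩ | ⟨a, _⟩
  exacts [h1 a, h2 a]

omit [NeZero n] in
lemma sym2_ne_snd {α : Type*} {u v z w : α} (h1 : v ≠ z) (h2 : v ≠ w) :
    s(u, v) ≠ s(z, w) := by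
  rw [Sym2.eq_swap]
  exact sym2_ne_fst h1 h2

omit [NeZero n] in
lemma del_adj {α : Type*} {G : SimpleGraph α} {X : Sym2 α} {u v : α} (h : G.Adj u v)
    (hne : s(u, v) ≠ X) : (G \ fromEdgeSet {X}).Adj u v := by
  rw [sdiff_adj, fromEdgeSet_adj]
  exact ⟨h, fun hc => hne hc.1⟩

lemma pfst {i i' : Fin n} {j j' : Fin 2} (h : i ≠ i') :
    ((i, j) : Fin n × Fin 2) ≠ (i', j') := fun hh => h (congrArg Prod.fst hh)

lemma psnd {i i' : Fin n} {j j' : Fin 2} (h : j ≠ j') :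
    ((i, j) : Fin n × Fin 2) ≠ (i', j') := fun hh => h (congrArg Prod.snd hh)

lemma nz {i : Fin n} (hv : i.val ≠ 0) : i ≠ 0 := fun h => hv (by rw [h, val0])

lemma geq2_of_connected {c : Cfg n} (hcon : (Gc c).Connected) {i : Fin n} (hv : i.val ≠ 0) :
    two (tOf c i) ∨ three (tOf c i) := by
  have h0i : (0 : Fin n) ≠ i := fun h => hv (by rw [← h, val0])
  -- three separation arguments
  have sep0 : ¬((tOf c i).1 = false ∧ (tOf c i).2.1 = false) := by
    rintro ⟨ha0, hr0⟩
    have hinv := eIn_color_reach c (fun i' j => decide (i' = i ∧ j = 0))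
      (fun j hj => by
        by_cases hji : j = i
        · subst hji
          rw [rOn, if_neg hv, hr0] at hj
          cases hj
        · simp [hji])
      (fun j hj => by
        obtain ⟨hjv, haj⟩ := hj
        by_cases hji : j = i
        · subst hji
          rw [haj] at ha0
          cases ha0
        · simp [hji, h0i])
      (fun j _ => by simp [h0i])
      (hcon.preconnected (i, 0) ((0 : Fin n), 0))
    simp [h0i] at hinv
  have sep1 : ¬((tOf c i).2.1 = false ∧ (tOf c i).2.2 = false) := by
    rintro ⟨hr0, hb0⟩
    have hinv := eIn_color_reach c (fun i' j => decide (i' = i ∧ j = 1))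
      (fun j hj => by
        by_cases hji : j = i
        · subst hji
          rw [rOn, if_neg hv, hr0] at hj
          cases hj
        · simp [hji])
      (fun j _ => by simp [h0i])
      (fun j hj => by
        obtain ⟨hjv, hbj⟩ := hj
        by_cases hji : j = i
        · subst hji
          rw [hbj] at hb0
          cases hb0
        · simp [hji, h0i])
      (hcon.preconnected (i, 1) ((0 : Fin n), 0))
    simp [h0i] at hinv
  have sep01 : ¬((tOf c i).1 = false ∧ (tOf c i).2.2 = false) := by
    rintro ⟨ha0, hb0⟩
    have hinv := eIn_color_reach c (fun i' _ => decide (i' = i))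
      (fun j _ => rfl)
      (fun j hj => by
        obtain ⟨hjv, haj⟩ := hj
        by_cases hji : j = i
        · subst hji
          rw [haj] at ha0
          cases ha0
        · simp [hji, h0i])
      (fun j hj => by
        obtain ⟨hjv, hbj⟩ := hj
        by_cases hji : j = i
        · subst hji
          rw [hbj] at hb0
          cases hb0
        · simp [hji, h0i])
      (hcon.preconnected (i, 0) ((0 : Fin n), 0))
    simp [h0i] at hinv
  rcases hA : (tOf c i).1 with _ | _ <;> rcases hR : (tOf c i).2.1 with _ | _ <;>
    rcases hB : (tOf c i).2.2 with _ | _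
  · exact absurd ⟨hA, hR⟩ sep0
  · exact absurd ⟨hA, hR⟩ sep0
  · exact absurd ⟨hA, hB⟩ sep01
  · exact Or.inl (Or.inr (Or.inr (Prod.ext hA (Prod.ext hR hB))))
  · exact absurd ⟨hR, hB⟩ sep1
  · exact Or.inl (Or.inr (Or.inl (Prod.ext hA (Prod.ext hR hB))))
  · exact Or.inl (Or.inl (Prod.ext hA (Prod.ext hR hB)))
  · exact Or.inr (Prod.ext hA (Prod.ext hR hB))

lemma exists_three_of_false {c : Cfg n} (hcon : (Gc c).Connected) (hef : c.1 = false) :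
    ∃ i : Fin n, i.val ≠ 0 ∧ tOf c i = (true, true, true) := by
  by_contra hno
  push_neg at hno
  have hall : ∀ i : Fin n, i.val ≠ 0 → two (tOf c i) := by
    intro i hv
    rcases geq2_of_connected hcon hv with h | h
    · exact h
    · exact absurd h (hno i hv)
  have hinv := eIn_color_reach c (κside c)
    (fun j hj => by
      by_cases hjv : j.val = 0
      · rw [rOn, if_pos hjv, hef] at hj
        cases hj
      · rw [rOn, if_neg hjv] at hj
        rcases hall j hjv with h | h | h
        · simp [κside, hjv, h]
        · rw [h] at hj; cases hj
        · simp [κside, hjv, h])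
    (fun j hj => by
      obtain ⟨hjv, haj⟩ := hj
      simp [κside, hjv, haj, val0])
    (fun j hj => by
      obtain ⟨hjv, hbj⟩ := hj
      simp [κside, hjv, hbj, val0])
    (hcon.preconnected ((0 : Fin n), (0 : Fin 2)) (0, 1))
  simp [κside, val0] at hinv

lemma not_e_and_three {c : Cfg n} (hac : (Gc c).IsAcyclic) {i : Fin n} (hv : i.val ≠ 0)
    (h3 : tOf c i = (true, true, true)) : c.1 ≠ true := by
  intro he
  have hbr := isAcyclic_iff_forall_adj_isBridge.1 hac (adj_e he)
  rw [isBridge_iff] at hbr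
  refine hbr ?_
  have hi0 : i ≠ 0 := nz hv
  refine (((del_adj (adj_a hv (by rw [h3])) (sym2_ne_snd (pfst hi0) (pfst hi0))).reachable).trans
    ((del_adj (adj_r hv (by rw [h3])) (sym2_ne_fst (pfst hi0) (pfst hi0))).reachable)).trans
    ((del_adj (adj_b hv (by rw [h3])) (sym2_ne_fst (pfst hi0) (pfst hi0))).reachable)

lemma not_two_threes {c : Cfg n} (hac : (Gc c).IsAcyclic) {i j : Fin n} (hvi : i.val ≠ 0)
    (hvj : j.val ≠ 0) (hij : i ≠ j) (h3i : tOf c i = (true, true, true))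
    (h3j : tOf c j = (true, true, true)) : False := by
  have hbr := isAcyclic_iff_forall_adj_isBridge.1 hac (adj_r hvi (by rw [h3i]))
  rw [isBridge_iff] at hbr
  refine hbr ?_
  have hi0 : i ≠ 0 := nz hvi
  have hj0 : j ≠ 0 := nz hvj
  have hji : j ≠ i := hij.symm
  refine (((((del_adj (adj_a hvi (by rw [h3i])) (sym2_ne_fst (pfst hi0.symm) (pfst hi0.symm))).symm.reachable).trans
    ((del_adj (adj_a hvj (by rw [h3j])) (sym2_ne_fst (pfst hi0.symm) (pfst hi0.symm))).reachable)).trans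
    ((del_adj (adj_r hvj (by rw [h3j])) (sym2_ne_fst (pfst hji) (pfst hji))).reachable)).trans
    ((del_adj (adj_b hvj (by rw [h3j])) (sym2_ne_snd (pfst hi0.symm) (pfst hi0.symm))).reachable)).trans
    ((del_adj (adj_b hvi (by rw [h3i])) (sym2_ne_snd (pfst hi0.symm) (pfst hi0.symm))).symm.reachable)

lemma P_of_isTree {c : Cfg n} (ht : (Gc c).IsTree) : P c := by
  obtain ⟨hcon, hac⟩ := ht
  cases hb : c.1
  · refine Or.inr ⟨hb, ?_⟩
    obtain ⟨i, hv, h3⟩ := exists_three_of_false hcon hb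
    refine ⟨⟨i, hv⟩, by rw [← tOf_coe c ⟨i, hv⟩]; exact h3, fun j hj => ?_⟩
    rcases geq2_of_connected hcon j.2 with h | h
    · rwa [tOf_coe] at h
    · exfalso
      refine not_two_threes hac j.2 hv ?_ h h3
      exact fun he => hj (Subtype.ext he)
  · refine Or.inl ⟨hb, fun i => ?_⟩
    rcases geq2_of_connected hcon i.2 with h | h
    · rwa [tOf_coe] at h
    · exact absurd hb (not_e_and_three hac i.2 h)

end SnK2Aux

namespace SnK2Aux
open SimpleGraph
variable {n : ℕ} [NeZero n]

omit [NeZero n] in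
lemma iso_isTree {α β : Type*} {G : SimpleGraph α} {H : SimpleGraph β} (e : G ≃g H)
    (h : G.IsTree) : H.IsTree := by
  refine ⟨e.connected_iff.1 h.isConnected, ?_⟩
  intro v w hw
  exact h.IsAcyclic (w.map e.symm.toHom)
    ((SimpleGraph.Walk.map_isCycle_iff_of_injective e.symm.toEquiv.injective).2 hw)

noncomputable def mainEquiv (n : ℕ) [NeZero n] :
    {c : Cfg n // P c} ≃ {H : (snK2 n).Subgraph // H.IsSpanning ∧ H.coe.IsTree} where
  toFun c := ⟨Φ c.1, Φ_spanning c.1,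
    iso_isTree ((Φ c.1).spanningCoeEquivCoeOfSpanning (Φ_spanning c.1)) (isTree_of_P c.2)⟩
  invFun H := ⟨decode H.1, by
    obtain ⟨H, hs, ht⟩ := H
    refine P_of_isTree (c := decode H) ?_
    have hGc : Gc (decode H) = H.spanningCoe := by rw [Gc, Φ_decode hs]
    rw [hGc]
    exact iso_isTree (H.spanningCoeEquivCoeOfSpanning hs).symm ht⟩
  left_inv c := Subtype.ext (decode_Φ c.1)
  right_inv H := Subtype.ext (Φ_decode H.2.1)

end SnK2Aux

namespace SnK2Aux
open SimpleGraph
variable {n : ℕ} [NeZero n]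

abbrev L (n : ℕ) := {i : Fin n // i.val ≠ 0}

instance : DecidablePred two := fun t =>
  inferInstanceAs (Decidable (t = (true, true, false) ∨ t = (true, false, true) ∨
    t = (false, true, true)))

lemma card_two : Nat.card {t : Tp // two t} = 3 := by
  rw [Nat.card_eq_fintype_card]
  decide

lemma card_L : Fintype.card (L n) = n - 1 := by
  have e1 : L n ≃ {i : Fin n // ¬(i = 0)} :=
    Equiv.subtypeEquivRight fun i => not_congr ⟨fz, fun h => by rw [h, val0]⟩
  rw [Fintype.card_congr e1, Fintype.card_subtype_compl, Fintype.card_subtype_eq,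
    Fintype.card_fin]

lemma card_Lne (i : L n) : Fintype.card {j : L n // j ≠ i} = n - 2 := by
  have e1 : {j : L n // j ≠ i} ≃ {j : L n // ¬(j = i)} :=
    Equiv.subtypeEquivRight fun _ => Iff.rfl
  rw [Fintype.card_congr e1, Fintype.card_subtype_compl, Fintype.card_subtype_eq, card_L]
  omega

def sumEquiv (n : ℕ) [NeZero n] : {c : Cfg n // P c} ≃
    ({f : L n → Tp // ∀ i, two (f i)} ⊕
     {f : L n → Tp // ∃ i, three (f i) ∧ ∀ j, j ≠ i → two (f j)}) where
  toFun c :=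
    dite (c.1.1 = true)
      (fun hb => Sum.inl ⟨c.1.2, fun i => by
        rcases c.2 with ⟨_, h2⟩ | ⟨hf, _⟩
        · exact h2 i
        · rw [hb] at hf; cases hf⟩)
      (fun hb => Sum.inr ⟨c.1.2, by
        rcases c.2 with ⟨ht, _⟩ | ⟨_, h2⟩
        · exact absurd ht hb
        · exact h2⟩)
  invFun := Sum.elim (fun f => ⟨(true, f.1), Or.inl ⟨rfl, f.2⟩⟩)
    (fun f => ⟨(false, f.1), Or.inr ⟨rfl, f.2⟩⟩)
  left_inv := by
    rintro ⟨⟨b, f⟩, h⟩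
    cases b <;> rfl
  right_inv := by
    rintro (f | f) <;> rfl

def Ψ (n : ℕ) [NeZero n] : (Σ i : L n, ({j : L n // j ≠ i} → {t : Tp // two t})) →
    {f : L n → Tp // ∃ i, three (f i) ∧ ∀ j, j ≠ i → two (f j)} :=
  fun x => ⟨fun j => if h : j = x.1 then (true, true, true) else (x.2 ⟨j, h⟩).1,
    ⟨x.1, by simp [three], fun j hj => by simp only [dif_neg hj]; exact (x.2 ⟨j, hj⟩).2⟩⟩

lemma Ψ_bij : Function.Bijective (Ψ n) := by
  constructor
  · rintro ⟨i, g⟩ ⟨i', g'⟩ he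
    have hev := congrArg Subtype.val he
    simp only [Ψ] at hev
    have hii : i = i' := by
      by_contra hne
      have h1 := congrFun hev i
      rw [dif_pos rfl, dif_neg hne] at h1
      exact not_two_three (g' ⟨i, hne⟩).2 h1.symm
    subst hii
    have hg : g = g' := funext fun j => Subtype.ext (by
      have h1 := congrFun hev j.1
      rwa [dif_neg j.2, dif_neg j.2] at h1)
    rw [hg]
  · rintro ⟨f, i, h3, h2⟩
    refine ⟨⟨i, fun j => ⟨f j.1, h2 j.1 j.2⟩⟩, Subtype.ext (funext fun j => ?_)⟩
    by_cases hj : j = i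
    · rw [Ψ]
      simp only [dif_pos hj, hj]
      exact h3.symm
    · rw [Ψ]
      simp only [dif_neg hj]

lemma card_A : Nat.card {f : L n → Tp // ∀ i, two (f i)} = 3 ^ (n - 1) := by
  rw [Nat.card_congr (Equiv.subtypePiEquivPi (p := fun _ t => two t)), Nat.card_fun,
    card_two, Nat.card_eq_fintype_card, card_L]

lemma card_B : Nat.card {f : L n → Tp // ∃ i, three (f i) ∧ ∀ j, j ≠ i → two (f j)} =
    (n - 1) * 3 ^ (n - 2) := by
  rw [← Nat.card_congr (Equiv.ofBijective _ (Ψ_bij (n := n)))]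
  have e2 : (Σ i : L n, ({j : L n // j ≠ i} → {t : Tp // two t})) ≃
      (L n) × (Fin (n - 2) → {t : Tp // two t}) :=
    (Equiv.sigmaCongrRight fun i =>
      Equiv.arrowCongr (Fintype.equivFinOfCardEq (card_Lne i)) (Equiv.refl _)).trans
      (Equiv.sigmaEquivProd _ _)
  rw [Nat.card_congr e2, Nat.card_prod, Nat.card_fun, card_two,
    Nat.card_eq_fintype_card (α := L n), card_L, Nat.card_eq_fintype_card (α := Fin (n - 2)),
    Fintype.card_fin]

end SnK2Aux


/-- The number of spanning trees of `S_n × K_2` is `(n+2)·3^(n-2)`. -/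
theorem num_spanning_trees_snK2 (n : ℕ) (hn : 2 ≤ n) :
    Nat.card {H : (snK2 n).Subgraph // H.IsSpanning ∧ H.coe.IsTree} =
      (n + 2) * 3 ^ (n - 2) := by

  haveI : NeZero n := ⟨by omega⟩
  rw [← Nat.card_congr (SnK2Aux.mainEquiv n), Nat.card_congr (SnK2Aux.sumEquiv n),
    Nat.card_sum, SnK2Aux.card_A, SnK2Aux.card_B]
  have h1 : n - 1 = (n - 2) + 1 := by omega
  rw [h1, pow_succ]
  calc 3 ^ (n - 2) * 3 + ((n - 2) + 1) * 3 ^ (n - 2)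
      = (3 + ((n - 2) + 1)) * 3 ^ (n - 2) := by ring
    _ = (n + 2) * 3 ^ (n - 2) := by rw [show 3 + ((n - 2) + 1) = n + 2 from by omega]
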